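/- Let a, b, δ, f, m, β be real numbers with b > 0, δ ≥ 0, f > 0, m > 0, β > 0, and suppose 2mf + δf² ≥ β. Set θ = af − bm and suppose θ < 0 and a ≥ 0. Then 0 ≤ aβ/m ≤ (a + bδ)f + bm and 0 ≤ ((a + bδ)β − θm)/(m + δf) ≤ (a + bδ)f + bm. -/
import Mathlib

theorem stmt_7 (a b δ f m β : ℝ) (hb : 0 < b) (hδ : 0 ≤ δ) (hf : 0 < f)
    (hm : 0 < m) (hβ : 0 < β) (hnpi : 2*m*f + δ*f^2 ≥ β)
    (hθ : a*f - b*m < 0) (ha : 0 ≤ a) :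
    (0 ≤ a*β/m ∧ a*β/m ≤ (a + b*δ)*f + b*m) ∧
    (0 ≤ ((a + b*δ)*β - (a*f - b*m)*m)/(m + δ*f) ∧
      ((a + b*δ)*β - (a*f - b*m)*m)/(m + δ*f) ≤ (a + b*δ)*f + b*m) := by
  have hden : 0 < m + δ*f := by positivity
  refine ⟨⟨by positivity, ?_⟩, ⟨?_, ?_⟩⟩
  · rw [div_le_iff₀ hm]
    nlinarith [mul_le_mul_of_nonneg_left hnpi.le ha,
      mul_lt_mul_of_pos_right hθ hm, mul_le_mul_of_nonneg_right hθ.le (mul_nonneg hδ hf.le)]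
  · apply div_nonneg _ hden.le
    nlinarith [mul_nonneg (mul_nonneg hb.le hδ) hβ.le, mul_nonneg ha hβ.le]
  · rw [div_le_iff₀ hden]
    nlinarith [mul_le_mul_of_nonneg_left hnpi.le (by positivity : (0:ℝ) ≤ a + b*δ),
      mul_nonneg (mul_nonneg ha hf.le) hm.le]
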